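/- Let A, B be finite sets with |A ∪ B| = n ≥ 2, and assign each element v of A ∪ B an independent geometric(1/2) random value r(v) on {0,1,2,...}. Let δ be the event that the maximum of r over A ∪ B is attained at a unique element and that element lies in the symmetric difference A △ B. Then P(δ) = α_n·(1 - J), where J = |A∩B|/|A∪B| and α_n = n·∑_{j=1}^∞ (1/2^{j+1})(1-1/2^j)^{n-1}. -/

import Mathlib

open MeasureTheory ProbabilityTheory

lemma geom_half_sum (j : ℕ) : ∑ k ∈ Finset.range j, ((1:ℝ) / 2) ^ (k + 1) = 1 - (1/2) ^ j := by
  induction j with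
  | zero => simp
  | succ j ih => rw [Finset.sum_range_succ, ih]; ring

lemma half_pow_ofReal (k : ℕ) : ((1:ENNReal) / 2) ^ k = ENNReal.ofReal ((1/2 : ℝ) ^ k) := by
  rw [ENNReal.ofReal_pow (by norm_num)]
  congr 1
  rw [ENNReal.ofReal_div_of_pos (by norm_num)]
  norm_num


/-- For finite sets `A, B` with `|A ∪ B| = n ≥ 2` and independent geometric(1/2) log-ranks on
the elements of `A ∪ B`, the probability that the maximum log-rank over `A ∪ B` is attained at
a unique element which lies in the symmetric difference `A △ B` equals `α_n (1 - J)`, where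
`J = |A ∩ B| / |A ∪ B|` and `α_n = n ∑_{j≥1} (1/2^{j+1})(1 - 1/2^j)^{n-1}`. -/
theorem delta_event_prob {Ω : Type*} [MeasureSpace Ω]
    [IsProbabilityMeasure (ℙ : Measure Ω)]
    {I : Type*} [DecidableEq I] (A B : Finset I)
    (n : ℕ) (hn : (A ∪ B).card = n) (h2 : 2 ≤ n)
    (r : I → Ω → ℕ) (hmeas : ∀ v, Measurable (r v))
    (hgeom : ∀ v ∈ A ∪ B, ∀ j : ℕ, ℙ {ω | r v ω = j} = (1 / 2) ^ (j + 1))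
    (hind : iIndepFun
      (fun v : ((A ∪ B : Finset I) : Type _) => r v.1) ℙ) :
    ℙ {ω | ∃ w ∈ (A \ B) ∪ (B \ A),
        (∀ v ∈ A ∪ B, r v ω ≤ r w ω) ∧ (∀ u ∈ A ∪ B, u ≠ w → r u ω < r w ω)}
      = ENNReal.ofReal
          (((n : ℝ) * ∑' j : ℕ, (1 / 2 ^ (j + 1) : ℝ) * (1 - 1 / 2 ^ j) ^ (n - 1))
            * (1 - ((A ∩ B).card : ℝ) / ((A ∪ B).card : ℝ))) := by
  classical
  -- P(r u < j)
  have hlt : ∀ u ∈ A ∪ B, ∀ j : ℕ, ℙ {ω | r u ω < j} = ENNReal.ofReal (1 - 1/2 ^ j) := by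
    intro u hu j
    have h1 : {ω | r u ω < j} = ⋃ k ∈ Finset.range j, {ω | r u ω = k} := by
      ext ω; simp
    rw [h1, measure_biUnion_finset]
    · have : ∀ k ∈ Finset.range j, ℙ {ω | r u ω = k} = ENNReal.ofReal ((1/2 : ℝ) ^ (k+1)) := by
        intro k _; rw [hgeom u hu k, half_pow_ofReal]
      rw [Finset.sum_congr rfl this, ← ENNReal.ofReal_sum_of_nonneg (fun k _ => by positivity)]
      rw [geom_half_sum, one_div, inv_pow, one_div]
    · intro a ha b hb hab
      simp only [Function.onFun, Set.disjoint_left]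
      intro ω h1 h2
      exact hab (by simp_all)
    · intro k _; exact (hmeas u) (measurableSet_singleton k)
  -- summand function and its properties
  set g : ℕ → ℝ := fun j => (1 / 2 ^ (j + 1) : ℝ) * (1 - 1 / 2 ^ j) ^ (n - 1) with hg
  have hhalf : ∀ j : ℕ, (1:ℝ)/2^j ≤ 1 := by
    intro j
    rw [div_le_one (by positivity)]; exact one_le_pow₀ (by norm_num)
  have hg0 : ∀ j, 0 ≤ g j := by
    intro j
    exact mul_nonneg (by positivity) (pow_nonneg (by linarith [hhalf j]) _)
  have hgsum : Summable g := by
    apply Summable.of_nonneg_of_le hg0 (fun j => ?_) (summable_geometric_two.mul_left (1/2))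
    have h2 : (1 - 1/2^j : ℝ) ^ (n-1) ≤ 1 :=
      pow_le_one₀ (by linarith [hhalf j]) (sub_le_self _ (by positivity))
    calc g j ≤ (1 / 2 ^ (j+1) : ℝ) * 1 := by
          apply mul_le_mul_of_nonneg_left h2 (by positivity)
      _ = 1/2 * (1/2)^j := by rw [mul_one]; rw [pow_succ]; simp only [one_div, inv_pow, mul_inv]; ring
  -- probability of the unique-max-at-w event, for w ∈ A ∪ B
  have hEw : ∀ w ∈ A ∪ B,
      ℙ {ω | ∀ u ∈ A ∪ B, u ≠ w → r u ω < r w ω} = ENNReal.ofReal (∑' j, g j) := by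
    intro w hw
    have hsplit : {ω | ∀ u ∈ A ∪ B, u ≠ w → r u ω < r w ω}
        = ⋃ j : ℕ, {ω | r w ω = j ∧ ∀ u ∈ A ∪ B, u ≠ w → r u ω < j} := by
      ext ω
      simp only [Set.mem_setOf_eq, Set.mem_iUnion]
      constructor
      · intro h; exact ⟨r w ω, rfl, fun u hu hne => h u hu hne⟩
      · rintro ⟨j, rfl, h⟩; exact h
    -- the j-slice as an intersection over the subtype
    have hFj : ∀ j : ℕ, ℙ {ω | r w ω = j ∧ ∀ u ∈ A ∪ B, u ≠ w → r u ω < j}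
        = ENNReal.ofReal (g j) := by
      intro j
      set s : ((A ∪ B : Finset I) : Type _) → Set Ω :=
        fun v => if (v : I) = w then {ω | r v.1 ω = j} else {ω | r v.1 ω < j} with hs
      have hset : {ω | r w ω = j ∧ ∀ u ∈ A ∪ B, u ≠ w → r u ω < j} = ⋂ v, s v := by
        ext ω
        simp only [Set.mem_setOf_eq, Set.mem_iInter, hs]
        constructor
        · rintro ⟨h1, h2⟩ v
          by_cases hv : (v : I) = w
          · rw [if_pos hv, Set.mem_setOf_eq, hv, h1]
          · rw [if_neg hv, Set.mem_setOf_eq]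
            exact h2 v.1 v.2 hv
        · intro h
          refine ⟨?_, ?_⟩
          · have := h ⟨w, hw⟩; simpa using this
          · intro u hu hne
            have := h ⟨u, hu⟩; simpa [hne] using this
      have hmeascomap : ∀ v : ((A ∪ B : Finset I) : Type _),
          MeasurableSet[MeasurableSpace.comap (fun ω => r v.1 ω) inferInstance] (s v) := by
        intro v
        refine MeasurableSpace.measurableSet_comap.2
          ⟨if (v : I) = w then {j} else Set.Iio j, trivial, ?_⟩
        by_cases hv : (v : I) = w <;> simp [hs, hv] <;> rfl
      rw [hset, hind.meas_iInter hmeascomap]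
      -- split the product at w
      have hwmem : (⟨w, hw⟩ : ((A ∪ B : Finset I) : Type _)) ∈ Finset.univ := Finset.mem_univ _
      rw [← Finset.mul_prod_erase _ _ hwmem]
      have hval1 : ℙ (s ⟨w, hw⟩) = ENNReal.ofReal ((1/2:ℝ)^(j+1)) := by
        simp only [hs, if_pos rfl]
        rw [hgeom w hw j, half_pow_ofReal]
      have hval2 : ∀ v ∈ Finset.univ.erase (⟨w, hw⟩ : ((A ∪ B : Finset I) : Type _)),
          ℙ (s v) = ENNReal.ofReal (1 - 1/2 ^ j) := by
        intro v hv
        have hne : (v : I) ≠ w := by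
          intro h
          exact (Finset.mem_erase.1 hv).1 (Subtype.ext h)
        simp only [hs, if_neg hne]
        exact hlt v.1 v.2 j
      rw [hval1, Finset.prod_congr rfl hval2, Finset.prod_const]
      have hcard : (Finset.univ.erase (⟨w, hw⟩ : ((A ∪ B : Finset I) : Type _))).card = n - 1 := by
        rw [Finset.card_erase_of_mem hwmem, Finset.card_univ, Fintype.card_coe, hn]
      rw [hcard, ← ENNReal.ofReal_pow (by linarith [hhalf j])]
      rw [← ENNReal.ofReal_mul (by positivity)]
      congr 1
      simp [hg, one_div, inv_pow]
    -- measurability of slices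
    have hFmeas : ∀ j : ℕ, MeasurableSet {ω | r w ω = j ∧ ∀ u ∈ A ∪ B, u ≠ w → r u ω < j} := by
      intro j
      have heq : {ω | r w ω = j ∧ ∀ u ∈ A ∪ B, u ≠ w → r u ω < j}
          = (r w ⁻¹' {j}) ∩ ⋂ u ∈ ((A ∪ B : Finset I) : Set I), ⋂ (_ : u ≠ w),
              r u ⁻¹' (Set.Iio j) := by
        ext ω; simp
      rw [heq]
      exact ((hmeas w) (measurableSet_singleton j)).inter
        (MeasurableSet.biInter (A ∪ B).countable_toSet
          (fun u _ => MeasurableSet.iInter fun _ => (hmeas u) measurableSet_Iio))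
    have hdisj : Pairwise (Function.onFun Disjoint
        fun j => {ω | r w ω = j ∧ ∀ u ∈ A ∪ B, u ≠ w → r u ω < j}) := by
      intro a b hab
      simp only [Function.onFun, Set.disjoint_left]
      rintro ω ⟨h1, -⟩ ⟨h2, -⟩
      exact hab (h1 ▸ h2 ▸ rfl)
    rw [hsplit, measure_iUnion hdisj hFmeas,
      ENNReal.ofReal_tsum_of_nonneg hg0 hgsum]
    exact tsum_congr hFj
  -- rewrite the event as a disjoint union over the symmetric difference
  have hTS : ∀ x ∈ (A \ B) ∪ (B \ A), x ∈ A ∪ B := by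
    intro x hx
    simp only [Finset.mem_union, Finset.mem_sdiff] at hx ⊢
    tauto
  have hev : {ω | ∃ w ∈ (A \ B) ∪ (B \ A),
        (∀ v ∈ A ∪ B, r v ω ≤ r w ω) ∧ (∀ u ∈ A ∪ B, u ≠ w → r u ω < r w ω)}
      = ⋃ w ∈ ((A \ B) ∪ (B \ A) : Finset I), {ω | ∀ u ∈ A ∪ B, u ≠ w → r u ω < r w ω} := by
    ext ω
    simp only [Set.mem_setOf_eq, Set.mem_iUnion, exists_prop]
    constructor
    · rintro ⟨w, hw, -, hstrict⟩; exact ⟨w, hw, hstrict⟩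
    · rintro ⟨w, hw, hstrict⟩
      refine ⟨w, hw, fun v hv => ?_, hstrict⟩
      rcases eq_or_ne v w with rfl | hne
      · exact le_rfl
      · exact (hstrict v hv hne).le
  have hEmeas : ∀ w ∈ (A \ B) ∪ (B \ A),
      MeasurableSet {ω | ∀ u ∈ A ∪ B, u ≠ w → r u ω < r w ω} := by
    intro w _
    have heq : {ω | ∀ u ∈ A ∪ B, u ≠ w → r u ω < r w ω}
        = ⋂ u ∈ ((A ∪ B : Finset I) : Set I), ⋂ (_ : u ≠ w), {ω | r u ω < r w ω} := by
      ext ω; simp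
    rw [heq]
    exact MeasurableSet.biInter (A ∪ B).countable_toSet
      (fun u _ => MeasurableSet.iInter fun _ => measurableSet_lt (hmeas u) (hmeas w))
  have hdisjE : Set.PairwiseDisjoint (((A \ B) ∪ (B \ A) : Finset I) : Set I)
      (fun w => {ω | ∀ u ∈ A ∪ B, u ≠ w → r u ω < r w ω}) := by
    intro a ha b hb hab
    simp only [Function.onFun, Set.disjoint_left, Set.mem_setOf_eq]
    intro ω h1 h2
    have hb' : b ∈ A ∪ B := hTS b (Finset.mem_coe.1 hb)
    have ha' : a ∈ A ∪ B := hTS a (Finset.mem_coe.1 ha)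
    exact lt_asymm (h1 b hb' (Ne.symm hab)) (h2 a ha' hab)
  rw [hev, measure_biUnion_finset hdisjE hEmeas,
    Finset.sum_congr rfl (fun w hw => hEw w (hTS w hw)), Finset.sum_const]
  -- cardinality of the symmetric difference
  have hm : (A ∩ B).card ≤ n := hn ▸ Finset.card_le_card Finset.inter_subset_union
  have hTcard : ((A \ B) ∪ (B \ A)).card = n - (A ∩ B).card := by
    have heq : (A \ B) ∪ (B \ A) = (A ∪ B) \ (A ∩ B) := by
      ext x
      simp only [Finset.mem_union, Finset.mem_sdiff, Finset.mem_inter]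
      tauto
    rw [heq, Finset.card_sdiff_of_subset Finset.inter_subset_union, hn]
  rw [hTcard, nsmul_eq_mul, ← ENNReal.ofReal_natCast,
    ← ENNReal.ofReal_mul (Nat.cast_nonneg _)]
  congr 1
  have hncast : ((A ∪ B).card : ℝ) = (n : ℝ) := by rw [hn]
  rw [hncast, Nat.cast_sub hm]
  have hn0 : (n:ℝ) ≠ 0 := Nat.cast_ne_zero.2 (by omega)
  field_simp
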